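/- Let M ≥ 1 be a natural number and define Φ(α) := e^{−α}∑_{x=1}^{M} α^x/(x−1)! for real α ≥ 0. Then for every α ≥ 0 there exists β with (M−1)/e ≤ β ≤ M such that Φ(β) ≥ Φ(α). In particular any maximiser of Φ over [0, ∞) lies in the interval [(M−1)/e, M], so a maximising α is of order Θ(M). -/

import Mathlib

/-- `Φ(α) = e^{-α} ∑_{x=1}^{M} α^x/(x-1)!`, the expected per-slot throughput of
frame slotted Aloha with multipacket reception capacity `M`. -/
noncomputable def Phi (M : ℕ) (α : ℝ) : ℝ :=
  Real.exp (-α) * ∑ x ∈ Finset.Icc 1 M, α ^ x / (Nat.factorial (x - 1) : ℝ)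


noncomputable def phiDeriv (M : ℕ) (α : ℝ) : ℝ :=
  Real.exp (-α) *
    ((∑ k ∈ Finset.range M, α ^ k / (Nat.factorial k : ℝ))
      - α ^ M / (Nat.factorial (M - 1) : ℝ))

lemma sum_identity (M : ℕ) (hM : 1 ≤ M) (α : ℝ) :
    (∑ x ∈ Finset.Icc 1 M, (x : ℝ) * α ^ (x - 1) / (Nat.factorial (x - 1) : ℝ))
      - ∑ x ∈ Finset.Icc 1 M, α ^ x / (Nat.factorial (x - 1) : ℝ)
    = (∑ k ∈ Finset.range M, α ^ k / (Nat.factorial k : ℝ))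
        - α ^ M / (Nat.factorial (M - 1) : ℝ) := by
  induction M with
  | zero => omega
  | succ M ih =>
    rcases Nat.lt_or_ge M 1 with h1 | h1
    · interval_cases M
      simp [Finset.Icc_self]
    · rw [Finset.sum_Icc_succ_top (by omega), Finset.sum_Icc_succ_top (by omega),
        Finset.sum_range_succ]
      have key := ih h1
      have hfac : (Nat.factorial M : ℝ) = (M : ℝ) * (Nat.factorial (M - 1) : ℝ) := by
        obtain ⟨m, rfl⟩ := Nat.exists_eq_add_of_le h1
        push_cast [Nat.factorial_succ, Nat.add_sub_cancel_left, add_comm 1 m]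
        ring_nf
      have hfpos : (0:ℝ) < (Nat.factorial (M - 1) : ℝ) := by positivity
      have hM0 : (0:ℝ) < (M:ℝ) := by exact_mod_cast h1
      have hsub : (M + 1) - 1 = M := by omega
      rw [hsub]
      have h2 : ((M:ℝ)+1)/(Nat.factorial M : ℝ) - 1/(Nat.factorial (M-1):ℝ)
          = 1/(Nat.factorial M:ℝ) := by
        rw [hfac]; field_simp; ring
      push_cast
      linear_combination key + α ^ M * h2

lemma hasDerivAt_Phi (M : ℕ) (hM : 1 ≤ M) (α : ℝ) :
    HasDerivAt (Phi M) (phiDeriv M α) α := by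
  have hS : HasDerivAt (fun a : ℝ => ∑ x ∈ Finset.Icc 1 M, a ^ x / (Nat.factorial (x - 1) : ℝ))
      (∑ x ∈ Finset.Icc 1 M, (x : ℝ) * α ^ (x - 1) / (Nat.factorial (x - 1) : ℝ)) α := by
    apply HasDerivAt.fun_sum
    intro x _
    exact (hasDerivAt_pow x α).div_const _
  have hE : HasDerivAt (fun a : ℝ => Real.exp (-a)) (-Real.exp (-α)) α := by
    simpa using ((hasDerivAt_neg α).exp)
  have h := hE.mul hS
  have heq : phiDeriv M α =
      -Real.exp (-α) * (∑ x ∈ Finset.Icc 1 M, α ^ x / (Nat.factorial (x - 1) : ℝ))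
        + Real.exp (-α) * (∑ x ∈ Finset.Icc 1 M, (x : ℝ) * α ^ (x - 1) / (Nat.factorial (x - 1) : ℝ)) := by
    rw [phiDeriv, ← sum_identity M hM α]; ring
  rw [heq]
  exact h

lemma phiDeriv_pos (M : ℕ) (hM2 : 2 ≤ M) {α : ℝ} (h0 : 0 ≤ α)
    (h1 : α ≤ ((M : ℝ) - 1) / Real.exp 1) : 0 < phiDeriv M α := by
  have hMcast : ((M - 1 : ℕ) : ℝ) = (M : ℝ) - 1 := by
    have : 1 ≤ M := by omega
    push_cast [this]; ring
  have hm0 : (0:ℝ) ≤ (M:ℝ) - 1 := by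
    have : (1:ℝ) ≤ (M:ℝ) := by exact_mod_cast Nat.one_le_of_lt hM2
    linarith
  have hfpos : (0:ℝ) < (Nat.factorial (M - 1) : ℝ) := by positivity
  -- single term of exp series
  have hsingle : ((M:ℝ) - 1) ^ (M - 1) / (Nat.factorial (M - 1) : ℝ)
      ≤ Real.exp ((M:ℝ) - 1) := by
    rw [← hMcast]
    calc ((M - 1 : ℕ):ℝ) ^ (M-1) / (Nat.factorial (M - 1) : ℝ)
        ≤ ∑ i ∈ Finset.range M, ((M - 1 : ℕ):ℝ) ^ i / (Nat.factorial i : ℝ) := by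
          apply Finset.single_le_sum (f := fun i => ((M - 1 : ℕ):ℝ) ^ i / (Nat.factorial i : ℝ))
          · intro i _; positivity
          · exact Finset.mem_range.2 (by omega)
      _ ≤ Real.exp ((M - 1 : ℕ):ℝ) := Real.sum_le_exp_of_nonneg (by positivity) M
  have hexp : Real.exp ((M:ℝ) - 1) = Real.exp 1 ^ (M - 1) := by
    rw [← hMcast, ← Real.exp_nat_mul, mul_one]
  have hA : α ^ (M - 1) ≤ (Nat.factorial (M - 1) : ℝ) := by
    calc α ^ (M - 1) ≤ (((M:ℝ) - 1) / Real.exp 1) ^ (M - 1) := pow_le_pow_left₀ h0 h1 _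
      _ = ((M:ℝ) - 1) ^ (M - 1) / Real.exp 1 ^ (M - 1) := div_pow _ _ _
      _ ≤ (Nat.factorial (M - 1) : ℝ) := by
          rw [div_le_iff₀ (by positivity), ← hexp]
          rw [div_le_iff₀ hfpos] at hsingle
          linarith [hsingle]
  have hB : α ^ M / (Nat.factorial (M - 1) : ℝ) ≤ α := by
    have hpowM : α ^ M = α ^ (M - 1) * α := by
      rw [← pow_succ]; congr 1; omega
    rw [hpowM, div_le_iff₀ hfpos]
    calc α ^ (M-1) * α ≤ (Nat.factorial (M - 1) : ℝ) * α :=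
          mul_le_mul_of_nonneg_right hA h0
      _ = α * (Nat.factorial (M - 1) : ℝ) := mul_comm _ _
  have hC : 1 + α ≤ ∑ k ∈ Finset.range M, α ^ k / (Nat.factorial k : ℝ) := by
    have h2 : ∑ k ∈ Finset.range 2, α ^ k / (Nat.factorial k : ℝ)
        ≤ ∑ k ∈ Finset.range M, α ^ k / (Nat.factorial k : ℝ) :=
      Finset.sum_le_sum_of_subset_of_nonneg (Finset.range_subset_range.2 hM2)
        (fun i _ _ => by positivity)
    simpa [Finset.sum_range_succ] using h2
  have : 0 < (∑ k ∈ Finset.range M, α ^ k / (Nat.factorial k : ℝ))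
      - α ^ M / (Nat.factorial (M - 1) : ℝ) := by linarith
  exact mul_pos (Real.exp_pos _) this

lemma phiDeriv_neg (M : ℕ) (hM : 1 ≤ M) {α : ℝ} (h : (M : ℝ) < α) :
    phiDeriv M α < 0 := by
  have hα0 : (0:ℝ) < α := lt_of_lt_of_le (by exact_mod_cast Nat.zero_lt_of_lt hM) h.le
  have hfpos : (0:ℝ) < (Nat.factorial (M - 1) : ℝ) := by positivity
  have hterm : ∀ k ∈ Finset.range M, α ^ k / (Nat.factorial k : ℝ)
      ≤ α ^ (M - 1) / (Nat.factorial (M - 1) : ℝ) := by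
    intro k hk
    have hkM : k ≤ M - 1 := by have := Finset.mem_range.1 hk; omega
    have hkfpos : (0:ℝ) < (Nat.factorial k : ℝ) := by positivity
    rw [div_le_div_iff₀ hkfpos hfpos]
    have hpow : α ^ (M - 1) = α ^ k * α ^ (M - 1 - k) := by
      rw [← pow_add]; congr 1; omega
    have hnat : Nat.factorial k * (M - 1).descFactorial (M - 1 - k)
        = Nat.factorial (M - 1) := by
      have h' := Nat.factorial_mul_descFactorial (show M - 1 - k ≤ M - 1 by omega)
      rwa [show M - 1 - (M - 1 - k) = k by omega] at h'
    have hdesc : (((M - 1).descFactorial (M - 1 - k) : ℕ) : ℝ) ≤ α ^ (M - 1 - k) := by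
      calc (((M - 1).descFactorial (M - 1 - k) : ℕ) : ℝ) ≤ ((M - 1 : ℕ) : ℝ) ^ (M - 1 - k) := by
            exact_mod_cast Nat.descFactorial_le_pow _ _
        _ ≤ α ^ (M - 1 - k) := by
            apply pow_le_pow_left₀ (by positivity)
            calc ((M - 1 : ℕ) : ℝ) ≤ (M : ℝ) := by exact_mod_cast Nat.sub_le M 1
              _ ≤ α := h.le
    have hfa : ((Nat.factorial (M - 1) : ℕ) : ℝ) ≤ α ^ (M - 1 - k) * (Nat.factorial k : ℝ) := by
      calc ((Nat.factorial (M - 1) : ℕ) : ℝ)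
          = (Nat.factorial k : ℝ) * (((M - 1).descFactorial (M - 1 - k) : ℕ) : ℝ) := by
            exact_mod_cast congrArg (fun n : ℕ => (n : ℝ)) hnat.symm
        _ ≤ (Nat.factorial k : ℝ) * α ^ (M - 1 - k) :=
            mul_le_mul_of_nonneg_left hdesc (by positivity)
        _ = α ^ (M - 1 - k) * (Nat.factorial k : ℝ) := mul_comm _ _
    rw [hpow]
    nlinarith [pow_nonneg hα0.le k, pow_nonneg hα0.le (M - 1 - k)]
  have hpowM : α ^ M = α ^ (M - 1) * α := by
    rw [← pow_succ]; congr 1; omega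
  have hT : (∑ k ∈ Finset.range M, α ^ k / (Nat.factorial k : ℝ))
      ≤ (M : ℝ) * (α ^ (M - 1) / (Nat.factorial (M - 1) : ℝ)) := by
    calc (∑ k ∈ Finset.range M, α ^ k / (Nat.factorial k : ℝ))
        ≤ ∑ _k ∈ Finset.range M, α ^ (M - 1) / (Nat.factorial (M - 1) : ℝ) :=
          Finset.sum_le_sum hterm
      _ = (M : ℝ) * (α ^ (M - 1) / (Nat.factorial (M - 1) : ℝ)) := by
          rw [Finset.sum_const, Finset.card_range, nsmul_eq_mul]
  have hlt : (M : ℝ) * (α ^ (M - 1) / (Nat.factorial (M - 1) : ℝ))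
      < α ^ M / (Nat.factorial (M - 1) : ℝ) := by
    have := mul_lt_mul_of_pos_right h (show (0:ℝ) < α ^ (M - 1) / (Nat.factorial (M - 1) : ℝ)
      by positivity)
    calc (M : ℝ) * (α ^ (M - 1) / (Nat.factorial (M - 1) : ℝ))
        < α * (α ^ (M - 1) / (Nat.factorial (M - 1) : ℝ)) := this
      _ = α ^ M / (Nat.factorial (M - 1) : ℝ) := by rw [hpowM]; ring
  exact mul_neg_of_pos_of_neg (Real.exp_pos _) (by linarith)

lemma phi_strictMonoOn (M : ℕ) (hM : 1 ≤ M) :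
    StrictMonoOn (Phi M) (Set.Icc 0 (((M : ℝ) - 1) / Real.exp 1)) := by
  apply strictMonoOn_of_deriv_pos (convex_Icc _ _)
  · exact fun x _ => ((hasDerivAt_Phi M hM x).differentiableAt.continuousAt).continuousWithinAt
  · intro x hx
    rw [interior_Icc] at hx
    rw [(hasDerivAt_Phi M hM x).deriv]
    have hM2 : 2 ≤ M := by
      by_contra hc
      have : M = 1 := by omega
      subst this
      simp at hx
    exact phiDeriv_pos M hM2 hx.1.le hx.2.le

lemma phi_strictAntiOn (M : ℕ) (hM : 1 ≤ M) :
    StrictAntiOn (Phi M) (Set.Ici (M : ℝ)) := by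
  apply strictAntiOn_of_deriv_neg (convex_Ici _)
  · exact fun x _ => ((hasDerivAt_Phi M hM x).differentiableAt.continuousAt).continuousWithinAt
  · intro x hx
    rw [interior_Ici] at hx
    rw [(hasDerivAt_Phi M hM x).deriv]
    exact phiDeriv_neg M hM hx

/-- for `M ≥ 1`, every value of `Φ` on `[0, ∞)` is dominated by a value of
`Φ` at some point of `[(M-1)/e, M]`; in particular every maximiser of `Φ` over `[0, ∞)`
lies in `[(M-1)/e, M]` (so a maximising `α` is `Θ(M)`). -/
theorem phi_maximiser_interval (M : ℕ) (hM : 1 ≤ M) :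
    (∀ α : ℝ, 0 ≤ α → ∃ β : ℝ,
        ((M : ℝ) - 1) / Real.exp 1 ≤ β ∧ β ≤ (M : ℝ) ∧ Phi M α ≤ Phi M β) ∧
    (∀ α : ℝ, 0 ≤ α → (∀ γ : ℝ, 0 ≤ γ → Phi M γ ≤ Phi M α) →
        ((M : ℝ) - 1) / Real.exp 1 ≤ α ∧ α ≤ (M : ℝ)) := by
  set c : ℝ := ((M : ℝ) - 1) / Real.exp 1 with hc
  have hM1 : (1:ℝ) ≤ (M:ℝ) := by exact_mod_cast hM
  have hc0 : 0 ≤ c := by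
    apply div_nonneg (by linarith) (Real.exp_pos 1).le
  have hcM : c ≤ (M : ℝ) := by
    have h1 : c ≤ (M:ℝ) - 1 := by
      apply div_le_self (by linarith)
      linarith [Real.add_one_le_exp 1]
    linarith
  constructor
  · intro α hα
    by_cases h1 : α ≤ c
    · exact ⟨c, le_refl c, hcM,
        ((phi_strictMonoOn M hM).monotoneOn ⟨hα, h1⟩ ⟨hc0, le_refl c⟩ h1)⟩
    · by_cases h2 : α ≤ (M : ℝ)
      · exact ⟨α, (not_le.1 h1).le, h2, le_refl _⟩
      · refine ⟨(M:ℝ), hcM, le_refl _, ?_⟩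
        exact (phi_strictAntiOn M hM).antitoneOn (Set.mem_Ici.2 (le_refl _))
          (Set.mem_Ici.2 (not_le.1 h2).le) (not_le.1 h2).le
  · intro α hα hmax
    constructor
    · by_contra hcon
      push_neg at hcon
      have hlt : Phi M α < Phi M c :=
        (phi_strictMonoOn M hM) ⟨hα, hcon.le⟩ ⟨hc0, le_refl c⟩ hcon
      exact absurd (hmax c hc0) (not_le.2 hlt)
    · by_contra hcon
      push_neg at hcon
      have hlt : Phi M α < Phi M (M:ℝ) :=
        (phi_strictAntiOn M hM) (Set.mem_Ici.2 (le_refl _)) (Set.mem_Ici.2 hcon.le) hcon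
      exact absurd (hmax (M:ℝ) (by linarith)) (not_le.2 hlt)
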